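/- Let u : [0,T] → [0,∞) be continuous, 0 ≤ α < 1, N ≥ 0, σ ≥ 0 with u(t) ≤ N + σ ∫₀^t (t-a)^{-α} u(a) da for all t ∈ [0,T]. Then there is a constant k ≥ 1 depending only on α such that u(t) ≤ k N exp( (3/2) (Γ(1-α) σ)^{1/(1-α)} t ) for t ∈ [0,T]. -/

import Mathlib

open MeasureTheory Set

theorem stmt7 (α : ℝ) (hα0 : 0 ≤ α) (hα1 : α < 1) :
    ∃ k ≥ (1:ℝ), ∀ (T N σ : ℝ) (u : ℝ → ℝ), 0 < T → 0 ≤ N → 0 ≤ σ →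
      ContinuousOn u (Icc 0 T) → (∀ t ∈ Icc (0:ℝ) T, 0 ≤ u t) →
      (∀ t ∈ Icc (0:ℝ) T, u t ≤ N + σ * ∫ a in (0:ℝ)..t, (t - a) ^ (-α) * u a) →
      ∀ t ∈ Icc (0:ℝ) T,
        u t ≤ k * N * Real.exp ((3 / 2) * (Real.Gamma (1 - α) * σ) ^ (1 / (1 - α)) * t) := by
  have hβ : (0:ℝ) < 1 - α := by linarith
  set q : ℝ := (2/3 : ℝ) ^ (1 - α) with hq_def
  have hq0 : 0 < q := Real.rpow_pos_of_pos (by norm_num) _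
  have hq1 : q < 1 := Real.rpow_lt_one (by norm_num) (by norm_num) hβ
  have hk1 : (1:ℝ) ≤ (1 - q)⁻¹ := by
    rw [one_le_inv₀ (by linarith)]; linarith
  refine ⟨(1 - q)⁻¹, hk1, ?_⟩
  intro T N σ u hT hN hσ hu hpos hineq t ht
  have hΓ : 0 < Real.Gamma (1 - α) := Real.Gamma_pos_of_pos hβ
  rcases hσ.eq_or_lt with hσ0 | hσ0
  · -- σ = 0 case
    have h := hineq t ht
    rw [← hσ0] at h
    simp only [zero_mul, add_zero] at h
    rw [← hσ0]
    have hz : (Real.Gamma (1 - α) * 0 : ℝ) ^ (1 / (1 - α)) = 0 := by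
      rw [mul_zero, Real.zero_rpow (by positivity)]
    calc u t ≤ N := h
      _ = 1 * N * 1 := by ring
      _ ≤ (1 - q)⁻¹ * N * Real.exp ((3 / 2) * (Real.Gamma (1 - α) * 0) ^ (1 / (1 - α)) * t) := by
          rw [hz, mul_zero, zero_mul, Real.exp_zero, mul_one]
          nlinarith [hk1, hN]
  -- σ > 0 case
  set Γa := Real.Gamma (1 - α) with hΓa
  set lam : ℝ := (Γa * σ / q) ^ (1 / (1 - α)) with hlam_def
  have hlam0 : 0 < lam := Real.rpow_pos_of_pos (by positivity) _
  have hlam_pow : lam ^ (1 - α) = Γa * σ / q := by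
    rw [hlam_def, ← Real.rpow_mul (by positivity), one_div_mul_cancel hβ.ne', Real.rpow_one]
  have hq_sig : σ * (Γa * lam ^ (α - 1)) = q := by
    have h1 : lam ^ (α - 1) = (Γa * σ / q)⁻¹ := by
      rw [show α - 1 = -(1 - α) by ring, Real.rpow_neg hlam0.le, hlam_pow]
    rw [h1]
    field_simp
  have hlam_eq : lam = (3 / 2) * (Γa * σ) ^ (1 / (1 - α)) := by
    have hq' : q ^ (1 / (1 - α)) = 2 / 3 := by
      rw [hq_def, ← Real.rpow_mul (by norm_num), mul_one_div_cancel hβ.ne', Real.rpow_one]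
    rw [hlam_def, Real.div_rpow (by positivity) hq0.le, hq']
    ring
  -- maximum of weighted function
  have hcont : ContinuousOn (fun s => u s * Real.exp (-lam * s)) (Icc 0 T) :=
    hu.mul (Real.continuous_exp.comp (continuous_const.mul continuous_id)).continuousOn
  obtain ⟨t₀, ht₀, hmax⟩ := isCompact_Icc.exists_isMaxOn (nonempty_Icc.mpr hT.le) hcont
  set M : ℝ := u t₀ * Real.exp (-lam * t₀) with hM_def
  have hM : ∀ s ∈ Icc (0:ℝ) T, u s * Real.exp (-lam * s) ≤ M := fun s hs => hmax hs
  have hM0 : 0 ≤ M := mul_nonneg (hpos t₀ ht₀) (Real.exp_pos _).le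
  have ht₀0 : 0 ≤ t₀ := ht₀.1
  have hsub : Icc (0:ℝ) t₀ ⊆ Icc 0 T := Icc_subset_Icc le_rfl ht₀.2
  -- integrability of the kernel
  have hker : IntervalIntegrable (fun a => (t₀ - a) ^ (-α)) volume 0 t₀ := by
    have h1 : IntervalIntegrable (fun x : ℝ => x ^ (-α)) volume 0 t₀ :=
      intervalIntegral.intervalIntegrable_rpow' (by linarith)
    have h2 := h1.comp_sub_left t₀
    simpa using h2.symm
  have huIcc : Set.uIcc (0:ℝ) t₀ = Icc 0 t₀ := uIcc_of_le ht₀0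
  have hint1 : IntervalIntegrable (fun a => (t₀ - a) ^ (-α) * u a) volume 0 t₀ :=
    hker.mul_continuousOn (by rw [huIcc]; exact hu.mono hsub)
  have hint2 : IntervalIntegrable
      (fun a => (t₀ - a) ^ (-α) * (M * Real.exp (lam * a))) volume 0 t₀ :=
    hker.mul_continuousOn (by fun_prop)
  -- comparison of integrals
  have hIub : (∫ a in (0:ℝ)..t₀, (t₀ - a) ^ (-α) * u a)
      ≤ ∫ a in (0:ℝ)..t₀, (t₀ - a) ^ (-α) * (M * Real.exp (lam * a)) := by
    apply intervalIntegral.integral_mono_on ht₀0 hint1 hint2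
    intro a ha
    have haT : a ∈ Icc (0:ℝ) T := hsub ha
    have h1 : u a ≤ M * Real.exp (lam * a) := by
      have h2 := hM a haT
      have h3 := mul_le_mul_of_nonneg_right h2 (Real.exp_pos (lam * a)).le
      rwa [mul_assoc, ← Real.exp_add, neg_mul, neg_add_cancel, Real.exp_zero, mul_one] at h3
    exact mul_le_mul_of_nonneg_left h1 (Real.rpow_nonneg (by linarith [ha.2]) _)
  -- compute the majorant integral
  have hI2 : (∫ a in (0:ℝ)..t₀, (t₀ - a) ^ (-α) * (M * Real.exp (lam * a)))
      = (M * Real.exp (lam * t₀)) * ∫ s in (0:ℝ)..t₀, s ^ (-α) * Real.exp (-(lam * s)) := by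
    have hrw : ∀ a : ℝ, (t₀ - a) ^ (-α) * (M * Real.exp (lam * a)) =
        (M * Real.exp (lam * t₀)) * ((t₀ - a) ^ (-α) * Real.exp (-(lam * (t₀ - a)))) := by
      intro a
      rw [show lam * a = lam * t₀ + -(lam * (t₀ - a)) by ring, Real.exp_add]
      ring
    simp only [hrw]
    rw [intervalIntegral.integral_const_mul]
    congr 1
    have h4 := intervalIntegral.integral_comp_sub_left (a := 0) (b := t₀)
      (fun s => s ^ (-α) * Real.exp (-(lam * s))) t₀
    simpa using h4
  -- bound the Gamma-type integral
  have hGauss : (∫ s in (0:ℝ)..t₀, s ^ (-α) * Real.exp (-(lam * s))) ≤ Γa * lam ^ (α - 1) := by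
    have hInt : IntegrableOn (fun s : ℝ => s ^ (-α) * Real.exp (-(lam * s))) (Ioi 0) := by
      have h5 := integrableOn_rpow_mul_exp_neg_mul_rpow (s := -α) (p := 1) (b := lam)
        (by linarith) zero_lt_one hlam0
      simpa [Real.rpow_one, neg_mul] using h5
    have hval : (∫ s in Ioi (0:ℝ), s ^ (-α) * Real.exp (-(lam * s))) = (1 / lam) ^ (1 - α) * Γa := by
      have h6 := Real.integral_rpow_mul_exp_neg_mul_Ioi hβ hlam0
      simpa [show (1 - α) - 1 = -α by ring] using h6
    have hpow : (1 / lam) ^ (1 - α) = lam ^ (α - 1) := by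
      rw [one_div, ← Real.rpow_neg_one lam, ← Real.rpow_mul hlam0.le,
        show (-1) * (1 - α) = α - 1 by ring]
    rw [intervalIntegral.integral_of_le ht₀0]
    calc (∫ s in Ioc (0:ℝ) t₀, s ^ (-α) * Real.exp (-(lam * s)))
        ≤ ∫ s in Ioi (0:ℝ), s ^ (-α) * Real.exp (-(lam * s)) := by
          apply setIntegral_mono_set hInt
          · rw [Filter.EventuallyLE, ae_restrict_iff' measurableSet_Ioi]
            filter_upwards with s hs
            exact mul_nonneg (Real.rpow_nonneg hs.le _) (Real.exp_pos _).le
          · exact HasSubset.Subset.eventuallyLE Ioc_subset_Ioi_self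
      _ = (1 / lam) ^ (1 - α) * Γa := hval
      _ = Γa * lam ^ (α - 1) := by rw [hpow]; ring
  -- assemble: M ≤ N + q M
  have hchain : u t₀ ≤ N + q * (M * Real.exp (lam * t₀)) := by
    have h7 := hineq t₀ ht₀
    have h8 : (∫ a in (0:ℝ)..t₀, (t₀ - a) ^ (-α) * u a)
        ≤ (M * Real.exp (lam * t₀)) * (Γa * lam ^ (α - 1)) := by
      refine hIub.trans ?_
      rw [hI2]
      exact mul_le_mul_of_nonneg_left hGauss (by positivity)
    have h9 : σ * ∫ a in (0:ℝ)..t₀, (t₀ - a) ^ (-α) * u a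
        ≤ q * (M * Real.exp (lam * t₀)) := by
      calc σ * ∫ a in (0:ℝ)..t₀, (t₀ - a) ^ (-α) * u a
          ≤ σ * ((M * Real.exp (lam * t₀)) * (Γa * lam ^ (α - 1))) :=
            mul_le_mul_of_nonneg_left h8 hσ
        _ = (σ * (Γa * lam ^ (α - 1))) * (M * Real.exp (lam * t₀)) := by ring
        _ = q * (M * Real.exp (lam * t₀)) := by rw [hq_sig]
    linarith
  have hMineq : M ≤ N + q * M := by
    have he1 : Real.exp (-lam * t₀) ≤ 1 := Real.exp_le_one_iff.mpr (by nlinarith)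
    calc M = u t₀ * Real.exp (-lam * t₀) := hM_def
      _ ≤ (N + q * (M * Real.exp (lam * t₀))) * Real.exp (-lam * t₀) :=
          mul_le_mul_of_nonneg_right hchain (Real.exp_pos _).le
      _ = N * Real.exp (-lam * t₀) + q * M * (Real.exp (lam * t₀) * Real.exp (-lam * t₀)) := by
          ring
      _ = N * Real.exp (-lam * t₀) + q * M := by
          rw [← Real.exp_add, neg_mul, add_neg_cancel, Real.exp_zero, mul_one]
      _ ≤ N + q * M := by
          have := mul_le_of_le_one_right hN he1
          linarith
  have hMN : M ≤ (1 - q)⁻¹ * N := by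
    rw [inv_mul_eq_div, le_div_iff₀ (by linarith)]
    nlinarith
  -- conclude
  have hut : u t ≤ M * Real.exp (lam * t) := by
    have h2 := hM t ht
    have h3 := mul_le_mul_of_nonneg_right h2 (Real.exp_pos (lam * t)).le
    rwa [mul_assoc, ← Real.exp_add, neg_mul, neg_add_cancel, Real.exp_zero, mul_one] at h3
  calc u t ≤ M * Real.exp (lam * t) := hut
    _ ≤ ((1 - q)⁻¹ * N) * Real.exp (lam * t) :=
        mul_le_mul_of_nonneg_right hMN (Real.exp_pos _).le
    _ = (1 - q)⁻¹ * N * Real.exp ((3 / 2) * (Γa * σ) ^ (1 / (1 - α)) * t) := by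
        rw [hlam_eq]
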